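/- arXiv:2309.06201 — 3 statements merged into one kernel-verified Lean document; each statement's English description precedes it below -/
import Mathlib

section
/- Let p ≥ 1 and let s_p(u) = ∑_{k=1}^p (−1)^k t_k u^k with t_k = (1/4^k)·C(2k,k). Then there exist real numbers α₀, α₁, …, α_p with ∑_{k=0}^p |α_k| ≤ 1 such that, as an identity of polynomials in u, (u+1)·(s_p(u)² + 2·s_p(u)) + u = (∑_{k=0}^p α_k u^k)·u^{p+1}. -/
open scoped BigOperators
open Polynomial Finset

/-- The polynomial `s_p = ∑_{k=1}^p (−1)^k t_k X^k` with `t_k = C(2k,k)/4^k`. -/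
noncomputable def sPoly (p : ℕ) : Polynomial ℝ :=
  ∑ k ∈ Finset.Icc 1 p,
    Polynomial.C ((-1 : ℝ) ^ k * ((Nat.choose (2 * k) k : ℝ) / 4 ^ k)) * Polynomial.X ^ k

noncomputable def tR (k : ℕ) : ℝ := (Nat.choose (2 * k) k : ℝ) / 4 ^ k

lemma tR_nonneg (k : ℕ) : 0 ≤ tR k := by
  unfold tR; positivity

lemma tR_zero : tR 0 = 1 := by simp [tR]

lemma tR_rec (k : ℕ) : ((k : ℝ) + 1) * tR (k + 1) = ((k : ℝ) + 1 / 2) * tR k := by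
  have h := Nat.succ_mul_centralBinom_succ k
  have h' : ((k : ℝ) + 1) * ((2 * (k + 1)).choose (k + 1) : ℝ)
      = 2 * (2 * (k : ℝ) + 1) * ((2 * k).choose k : ℝ) := by
    unfold Nat.centralBinom at h
    exact_mod_cast congrArg (Nat.cast : ℕ → ℝ) h
  have e1 : ((k : ℝ) + 1) * tR (k + 1)
      = (((k : ℝ) + 1) * ((2 * (k + 1)).choose (k + 1) : ℝ)) / 4 ^ (k + 1) := by
    unfold tR; ring
  rw [e1, h']
  unfold tR
  rw [pow_succ]
  have h4 : (4 : ℝ) ^ k ≠ 0 := by positivity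
  field_simp
  ring

lemma tR_antitone (k : ℕ) : tR (k + 1) ≤ tR k := by
  have h := tR_rec k
  have hk : (0 : ℝ) < (k : ℝ) + 1 := by positivity
  have ht := tR_nonneg k
  nlinarith

noncomputable def SS (n : ℕ) : ℝ := ∑ i ∈ Finset.range (n + 1), tR i * tR (n - i)

lemma double_sum (n : ℕ) :
    2 * (∑ i ∈ Finset.range (n + 1), (i : ℝ) * (tR i * tR (n - i))) = (n : ℝ) * SS n := by
  have hrefl : (∑ i ∈ Finset.range (n + 1), (i : ℝ) * (tR i * tR (n - i)))
      = ∑ i ∈ Finset.range (n + 1), ((n - i : ℕ) : ℝ) * (tR (n - i) * tR i) := by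
    rw [← Finset.sum_range_reflect]
    apply Finset.sum_congr rfl
    intro i hi
    simp only [Finset.mem_range] at hi
    have e1 : n + 1 - 1 - i = n - i := by omega
    rw [e1]
    have e2 : n - (n - i) = i := by omega
    rw [e2]
  unfold SS
  rw [two_mul]
  nth_rewrite 2 [hrefl]
  rw [← Finset.sum_add_distrib, Finset.mul_sum]
  apply Finset.sum_congr rfl
  intro i hi
  simp only [Finset.mem_range] at hi
  have hc : ((n - i : ℕ) : ℝ) = (n : ℝ) - (i : ℝ) := by
    have : i ≤ n := by omega
    push_cast [this]; ring
  rw [hc]; ring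

lemma SS_eq_one (n : ℕ) : SS n = 1 := by
  induction n with
  | zero => simp [SS, tR_zero]
  | succ n ih =>
    have key : ((n : ℝ) + 1) * SS (n + 1) = ((n : ℝ) + 1) * SS n := by
      have h1 := double_sum (n + 1)
      push_cast at h1
      have h2 : (∑ i ∈ Finset.range (n + 2), (i : ℝ) * (tR i * tR (n + 1 - i)))
          = ∑ j ∈ Finset.range (n + 1), ((j : ℝ) + 1) * (tR (j + 1) * tR (n - j)) := by
        rw [Finset.sum_range_succ']
        simp only [Nat.cast_zero, zero_mul, add_zero]
        apply Finset.sum_congr rfl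
        intro j hj
        have : n + 1 - (j + 1) = n - j := by omega
        rw [this]; push_cast; ring
      have h3 : ∀ j : ℕ, ((j : ℝ) + 1) * (tR (j + 1) * tR (n - j))
          = ((j : ℝ) + 1 / 2) * (tR j * tR (n - j)) := by
        intro j
        have hj := tR_rec j
        calc ((j : ℝ) + 1) * (tR (j + 1) * tR (n - j))
            = (((j : ℝ) + 1) * tR (j + 1)) * tR (n - j) := by ring
          _ = (((j : ℝ) + 1 / 2) * tR j) * tR (n - j) := by rw [hj]
          _ = ((j : ℝ) + 1 / 2) * (tR j * tR (n - j)) := by ring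
      have h4 : (∑ j ∈ Finset.range (n + 1), ((j : ℝ) + 1 / 2) * (tR j * tR (n - j)))
          = (∑ j ∈ Finset.range (n + 1), (j : ℝ) * (tR j * tR (n - j))) + (1 / 2) * SS n := by
        unfold SS
        rw [Finset.mul_sum, ← Finset.sum_add_distrib]
        apply Finset.sum_congr rfl; intro j _; ring
      have h5 := double_sum n
      rw [h2] at h1
      simp only [h3] at h1
      rw [h4] at h1
      nlinarith [h5, h1]
    have hpos : ((n : ℝ) + 1) ≠ 0 := by positivity
    have := mul_left_cancel₀ hpos key
    rw [this, ih]

noncomputable def fc (p n : ℕ) : ℝ := if n ≤ p then (-1 : ℝ) ^ n * tR n else 0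

noncomputable def TT (p n : ℕ) : ℝ :=
  ∑ i ∈ Finset.range (n + 1), if i ≤ p ∧ n - i ≤ p then tR i * tR (n - i) else 0

noncomputable def cc (p n : ℕ) : ℝ := ∑ i ∈ Finset.range (n + 1), fc p i * fc p (n - i)

lemma cc_eq (p n : ℕ) : cc p n = (-1 : ℝ) ^ n * TT p n := by
  unfold cc TT
  rw [Finset.mul_sum]
  apply Finset.sum_congr rfl
  intro i hi
  simp only [Finset.mem_range] at hi
  unfold fc
  by_cases h1 : i ≤ p <;> by_cases h2 : n - i ≤ p <;> simp [h1, h2]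
  have : (-1 : ℝ) ^ i * tR i * ((-1 : ℝ) ^ (n - i) * tR (n - i))
      = ((-1 : ℝ) ^ i * (-1 : ℝ) ^ (n - i)) * (tR i * tR (n - i)) := by ring
  rw [this, ← pow_add]
  congr 2
  omega

lemma TT_nonneg (p n : ℕ) : 0 ≤ TT p n := by
  unfold TT
  apply Finset.sum_nonneg
  intro i _
  split_ifs
  · exact mul_nonneg (tR_nonneg _) (tR_nonneg _)
  · exact le_refl 0

lemma TT_eq_SS (p n : ℕ) (h : n ≤ p) : TT p n = SS n := by
  unfold TT SS
  apply Finset.sum_congr rfl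
  intro i hi
  simp only [Finset.mem_range] at hi
  have h1 : i ≤ p := by omega
  have h2 : n - i ≤ p := by omega
  simp [h1, h2]

lemma TT_eq_zero (p n : ℕ) (h : 2 * p + 1 ≤ n) : TT p n = 0 := by
  unfold TT
  apply Finset.sum_eq_zero
  intro i hi
  simp only [Finset.mem_range] at hi
  have : ¬(i ≤ p ∧ n - i ≤ p) := by omega
  rw [if_neg this]

lemma TT_antitone (p n : ℕ) (h : p ≤ n) : TT p (n + 1) ≤ TT p n := by
  unfold TT
  have hz : (if n + 1 ≤ p ∧ n - (n + 1) ≤ p then tR (n + 1) * tR (n - (n + 1)) else 0) = 0 :=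
    if_neg (by omega)
  have hT : (∑ i ∈ Finset.range (n + 2), if i ≤ p ∧ n - i ≤ p then tR i * tR (n - i) else 0)
      = ∑ i ∈ Finset.range (n + 1), if i ≤ p ∧ n - i ≤ p then tR i * tR (n - i) else 0 := by
    rw [Finset.sum_range_succ, hz, add_zero]
  rw [← hT]
  apply Finset.sum_le_sum
  intro i hi
  simp only [Finset.mem_range] at hi
  by_cases hc : i ≤ p ∧ n + 1 - i ≤ p
  · have hin : i ≤ n := by omega
    have hc2 : i ≤ p ∧ n - i ≤ p := by omega
    rw [if_pos hc, if_pos hc2]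
    have : n + 1 - i = (n - i) + 1 := by omega
    rw [this]
    exact mul_le_mul_of_nonneg_left (tR_antitone _) (tR_nonneg _)
  · rw [if_neg hc]
    split_ifs
    · exact mul_nonneg (tR_nonneg _) (tR_nonneg _)
    · exact le_refl 0

noncomputable def fP (p : ℕ) : Polynomial ℝ :=
  ∑ k ∈ Finset.range (p + 1), Polynomial.C ((-1 : ℝ) ^ k * tR k) * Polynomial.X ^ k

lemma sum_C_X_coeff (g : ℕ → ℝ) (q m : ℕ) :
    (∑ k ∈ Finset.range (q + 1), Polynomial.C (g k) * Polynomial.X ^ k).coeff m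
      = if m ≤ q then g m else 0 := by
  rw [Polynomial.finset_sum_coeff]
  simp only [Polynomial.coeff_C_mul, Polynomial.coeff_X_pow, mul_ite, mul_one, mul_zero]
  rw [Finset.sum_ite_eq]
  simp [Nat.lt_succ_iff]

lemma fP_coeff (p n : ℕ) : (fP p).coeff n = fc p n := by
  unfold fP fc
  rw [sum_C_X_coeff]

lemma fP_sq_coeff (p n : ℕ) : ((fP p) ^ 2).coeff n = cc p n := by
  rw [sq, Polynomial.coeff_mul, Finset.Nat.sum_antidiagonal_eq_sum_range_succ_mk]
  unfold cc
  apply Finset.sum_congr rfl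
  intro i _
  rw [fP_coeff, fP_coeff]

lemma sPoly_eq (p : ℕ) : sPoly p = fP p - 1 := by
  have h0 : (0 : ℕ) ∈ Finset.range (p + 1) := by simp
  have hset : Finset.range (p + 1) \ {0} = Finset.Icc 1 p := by
    ext x
    simp only [Finset.mem_sdiff, Finset.mem_range, Finset.mem_singleton, Finset.mem_Icc]
    omega
  have hsum := Finset.sum_eq_sum_sdiff_singleton_add h0
    (fun k => Polynomial.C ((-1 : ℝ) ^ k * tR k) * Polynomial.X ^ k)
  unfold fP
  rw [hsum, hset]
  have h1 : Polynomial.C ((-1 : ℝ) ^ 0 * tR 0) * Polynomial.X ^ 0 = 1 := by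
    simp [tR_zero]
  rw [h1]
  show sPoly p = (sPoly p + 1) - 1
  ring

lemma cc_zero (p : ℕ) : cc p 0 = 1 := by
  simp [cc, fc, tR_zero]

lemma L_coeff_succ (p m : ℕ) :
    (Polynomial.X * (fP p) ^ 2 + ((fP p) ^ 2 - 1)).coeff (m + 1) = cc p m + cc p (m + 1) := by
  simp [Polynomial.coeff_add, Polynomial.coeff_X_mul, Polynomial.coeff_sub, fP_sq_coeff,
    Polynomial.coeff_one]

lemma L_coeff_zero (p : ℕ) :
    (Polynomial.X * (fP p) ^ 2 + ((fP p) ^ 2 - 1)).coeff 0 = 0 := by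
  rw [Polynomial.coeff_add, Polynomial.mul_coeff_zero, Polynomial.coeff_sub,
    fP_sq_coeff, cc_zero]
  simp

/-- Lemma 3.4: `(u+1)(s_p(u)² + 2 s_p(u)) + u = (∑_{k=0}^p α_k u^k) u^{p+1}`
with `∑ |α_k| ≤ 1`. -/
theorem sp_poly_identity (p : ℕ) (hp : 1 ≤ p) :
    ∃ α : ℕ → ℝ, (∑ k ∈ Finset.range (p + 1), |α k|) ≤ 1 ∧
      (Polynomial.X + 1) * ((sPoly p) ^ 2 + 2 * sPoly p) + Polynomial.X =
        (∑ k ∈ Finset.range (p + 1), Polynomial.C (α k) * Polynomial.X ^ k) *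
          Polynomial.X ^ (p + 1) := by
  refine ⟨fun k => cc p (p + k) + cc p (p + k + 1), ?_, ?_⟩
  · have habs : ∀ k : ℕ, |cc p (p + k) + cc p (p + k + 1)|
        = TT p (p + k) - TT p (p + k + 1) := by
      intro k
      have hmono := TT_antitone p (p + k) (by omega)
      rw [cc_eq, cc_eq, pow_succ]
      rw [show (-1 : ℝ) ^ (p + k) * TT p (p + k)
            + (-1 : ℝ) ^ (p + k) * -1 * TT p (p + k + 1)
          = (-1 : ℝ) ^ (p + k) * (TT p (p + k) - TT p (p + k + 1)) from by ring]
      rw [abs_mul, abs_pow, abs_neg, abs_one, one_pow, one_mul,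
        abs_of_nonneg (by linarith)]
    calc (∑ k ∈ Finset.range (p + 1), |cc p (p + k) + cc p (p + k + 1)|)
        = ∑ k ∈ Finset.range (p + 1), (TT p (p + k) - TT p (p + k + 1)) :=
          Finset.sum_congr rfl (fun k _ => habs k)
      _ = TT p (p + 0) - TT p (p + (p + 1)) :=
          Finset.sum_range_sub' (fun k => TT p (p + k)) (p + 1)
      _ ≤ 1 := by
          rw [show p + 0 = p from rfl, TT_eq_SS p p le_rfl, SS_eq_one,
            TT_eq_zero p (p + (p + 1)) (by omega)]
          norm_num
  · have hs : sPoly p = fP p - 1 := sPoly_eq p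
    have hP : (Polynomial.X + 1) * ((sPoly p) ^ 2 + 2 * sPoly p) + Polynomial.X
        = Polynomial.X * (fP p) ^ 2 + ((fP p) ^ 2 - 1) := by rw [hs]; ring
    rw [hP]
    ext n
    rw [Polynomial.coeff_mul_X_pow']
    rcases Nat.lt_or_ge n (p + 1) with hn | hn
    · rw [if_neg (by omega)]
      match n with
      | 0 => exact L_coeff_zero p
      | Nat.succ m =>
        rw [L_coeff_succ, cc_eq, cc_eq, TT_eq_SS p m (by omega),
          TT_eq_SS p (m + 1) (by omega), SS_eq_one, SS_eq_one, pow_succ]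
        ring
    · rw [if_pos hn, sum_C_X_coeff]
      rcases Nat.lt_or_ge (2 * p + 1) n with h2 | h2
      · -- n ≥ 2p + 2
        rw [if_neg (by omega)]
        obtain ⟨m, rfl⟩ : ∃ m, n = m + 1 := ⟨n - 1, by omega⟩
        rw [L_coeff_succ, cc_eq, cc_eq, TT_eq_zero p m (by omega),
          TT_eq_zero p (m + 1) (by omega)]
        ring
      · rw [if_pos (by omega)]
        obtain ⟨m, rfl⟩ : ∃ m, n = m + 1 := ⟨n - 1, by omega⟩
        rw [L_coeff_succ]
        have e1 : p + (m + 1 - (p + 1)) = m := by omega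
        rw [e1]
end

section
/- Let Σ ∈ ℂ^{ℓ×q} be diagonal with pairwise distinct positive diagonal entries σ₁,…,σ_q, and set κ = κ(Σ), K = K(Σ). Let α, ε ≥ 0 with 1 − 8αε > 0 and put c = 1/(1 − 4αε). If Σ' ∈ ℂ^{ℓ×q} is diagonal with real diagonal entries and ‖Σ' − Σ‖ ≤ 2αcε/κ, then the diagonal entries of Σ' are positive and pairwise distinct, K − 2αcε ≤ K(Σ') ≤ K + 2αcε, and κ/c ≤ κ(Σ') ≤ κ/(1 − 4αcε). -/
open Matrix Filter
open scoped BigOperators ComplexOrder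

/-- Row-sum norm `‖A‖₁ = max_i ∑_j |A i j|`. -/
noncomputable def rowNorm {a b : ℕ} (A : Matrix (Fin a) (Fin b) ℂ) : ℝ :=
  ⨆ i, ∑ j, ‖A i j‖

/-- The matrix norm `‖A‖ = max (‖A‖₁, ‖Aᴴ‖₁)` used throughout. -/
noncomputable def mnorm {a b : ℕ} (A : Matrix (Fin a) (Fin b) ℂ) : ℝ :=
  max (rowNorm A) (rowNorm Aᴴ)

/-- The `ℓ × q` diagonal matrix with real diagonal entries `σ`. -/
noncomputable def diagMat (l q : ℕ) (σ : Fin q → ℝ) : Matrix (Fin l) (Fin q) ℂ :=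
  fun i j => if (i : ℕ) = (j : ℕ) then (σ j : ℂ) else 0

/-- `κ(Σ) = max (1, max_i 1/σ_i, max_{i≠j} (1/|σ_i−σ_j| + 1/(σ_i+σ_j)))`. -/
noncomputable def kappa {q : ℕ} (σ : Fin q → ℝ) : ℝ :=
  max 1 (max (⨆ i, 1 / σ i)
    (⨆ i, ⨆ j, if i ≠ j then 1 / |σ i - σ j| + 1 / (σ i + σ j) else 0))

/-- `K(Σ) = max (1, max_i σ_i)`. -/
noncomputable def Kbig {q : ℕ} (σ : Fin q → ℝ) : ℝ :=
  max 1 (⨆ i, σ i)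

private lemma fin_le_ciSup {n : ℕ} (f : Fin n → ℝ) (i : Fin n) : f i ≤ ⨆ j, f j :=
  le_ciSup (Set.Finite.bddAbove (Set.finite_range f)) i

private lemma one_le_kappa {q : ℕ} (σ : Fin q → ℝ) : 1 ≤ kappa σ := le_max_left _ _

private lemma inv_le_kappa {q : ℕ} (σ : Fin q → ℝ) (i : Fin q) : 1 / σ i ≤ kappa σ :=
  le_trans (le_trans (fin_le_ciSup (fun i' => 1 / σ i') i) (le_max_left _ _))
    (le_max_right 1 _)

private lemma pair_le_kappa {q : ℕ} (σ : Fin q → ℝ) {i j : Fin q} (h : i ≠ j) :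
    1 / |σ i - σ j| + 1 / (σ i + σ j) ≤ kappa σ := by
  have h1 : (if i ≠ j then 1 / |σ i - σ j| + 1 / (σ i + σ j) else 0)
      ≤ ⨆ j', (if i ≠ j' then 1 / |σ i - σ j'| + 1 / (σ i + σ j') else 0) :=
    fin_le_ciSup (fun j' => if i ≠ j' then 1 / |σ i - σ j'| + 1 / (σ i + σ j') else 0) j
  rw [if_pos h] at h1
  refine le_trans h1 (le_trans ?_ (le_trans (le_max_right _ _) (le_max_right 1 _)))
  exact fin_le_ciSup (fun i' => ⨆ j', (if i' ≠ j' then 1 / |σ i' - σ j'| + 1 / (σ i' + σ j') else 0)) i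

private lemma sandwich {c t t' L : ℝ} (hc1 : 1 ≤ c) (hL : 0 < L) (hLt : L ≤ t)
    (hclose : |t' - t| ≤ (c - 1) * L) : (2 - c) * t ≤ t' ∧ t' ≤ c * t := by
  obtain ⟨h1, h2⟩ := abs_le.mp hclose
  have key : 0 ≤ (c - 1) * (t - L) := mul_nonneg (by linarith) (by linarith)
  constructor <;> nlinarith

set_option maxHeartbeats 1000000 in
/-- Lemma 5.3: stability of `K` and `κ` under a diagonal perturbation. -/
theorem kappa_K_stability {l q : ℕ} (hlq : q ≤ l) (σ σ' : Fin q → ℝ)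
    (hpos : ∀ i, 0 < σ i) (hdist : ∀ i j, i ≠ j → σ i ≠ σ j)
    (α ε : ℝ) (hα : 0 ≤ α) (hε : 0 ≤ ε) (h8 : 0 < 1 - 8 * α * ε)
    (c : ℝ) (hc : c = 1 / (1 - 4 * α * ε))
    (hclose : mnorm (diagMat l q σ' - diagMat l q σ) ≤ 2 * α * c * ε / kappa σ) :
    (∀ i, 0 < σ' i) ∧ (∀ i j, i ≠ j → σ' i ≠ σ' j) ∧
    Kbig σ - 2 * α * c * ε ≤ Kbig σ' ∧ Kbig σ' ≤ Kbig σ + 2 * α * c * ε ∧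
    kappa σ / c ≤ kappa σ' ∧ kappa σ' ≤ kappa σ / (1 - 4 * α * c * ε) := by
  have hαε : 0 ≤ α * ε := mul_nonneg hα hε
  have h4 : 0 < 1 - 4 * α * ε := by nlinarith
  have hc0 : 0 < c := by rw [hc]; positivity
  have hcc : c * (1 - 4 * α * ε) = 1 := by rw [hc]; field_simp
  have hc1 : 1 ≤ c := by nlinarith [mul_nonneg (mul_nonneg hc0.le hα) hε]
  have hc2 : c < 2 := by
    nlinarith [mul_pos hc0 (show (0:ℝ) < 1/2 - 4*(α*ε) by nlinarith)]
  have h2c : 0 < 2 - c := by linarith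
  have hkey : 2 * α * c * ε = (c - 1) / 2 := by linear_combination (-1/2 : ℝ) * hcc
  have h4c : 1 - 4 * α * c * ε = 2 - c := by linear_combination hcc
  rcases Nat.eq_zero_or_pos q with hq | hq
  · subst hq
    have e1 : kappa σ = 1 := by
      simp [kappa, iSup_of_empty', Real.sSup_empty]
    have e2 : kappa σ' = 1 := by
      simp [kappa, iSup_of_empty', Real.sSup_empty]
    have e3 : Kbig σ = 1 := by
      simp [Kbig, iSup_of_empty', Real.sSup_empty]
    have e4 : Kbig σ' = 1 := by
      simp [Kbig, iSup_of_empty', Real.sSup_empty]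
    refine ⟨fun i => i.elim0, fun i j _ => i.elim0, ?_, ?_, ?_, ?_⟩
    · rw [e3, e4, hkey]; linarith
    · rw [e3, e4, hkey]; linarith
    · rw [e1, e2, div_le_one hc0]; exact hc1
    · rw [e1, e2, h4c, le_div_iff₀ h2c]; linarith
  haveI hne : Nonempty (Fin q) := ⟨⟨0, hq⟩⟩
  set κ := kappa σ with hκdef
  have hκ1 : (1:ℝ) ≤ κ := one_le_kappa σ
  have hκ0 : (0:ℝ) < κ := by linarith
  -- entrywise bound from the norm hypothesis
  have hδ : ∀ i : Fin q, |σ' i - σ i| ≤ (c - 1) / (2 * κ) := by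
    intro i0
    have hrow : (∑ j, ‖(diagMat l q σ' - diagMat l q σ) (Fin.castLE hlq i0) j‖)
        = |σ' i0 - σ i0| := by
      have hterm : ∀ j : Fin q,
          ‖(diagMat l q σ' - diagMat l q σ) (Fin.castLE hlq i0) j‖
          = if i0 = j then |σ' j - σ j| else 0 := by
        intro j
        simp only [Matrix.sub_apply, diagMat, Fin.coe_castLE]
        by_cases h : i0 = j
        · subst h
          simp [← Complex.ofReal_sub, Complex.norm_real, Real.norm_eq_abs]
        · have h' : (i0 : ℕ) ≠ (j : ℕ) := fun hh => h (Fin.ext hh)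
          simp [h, h']
      rw [Finset.sum_congr rfl fun j _ => hterm j]
      simp
    have h1 : |σ' i0 - σ i0| ≤ rowNorm (diagMat l q σ' - diagMat l q σ) := by
      rw [← hrow]
      exact fin_le_ciSup
        (fun i => ∑ j, ‖(diagMat l q σ' - diagMat l q σ) i j‖) _
    have h2 : rowNorm (diagMat l q σ' - diagMat l q σ) ≤ 2 * α * c * ε / κ :=
      le_trans (le_max_left _ _) hclose
    have h3 : 2 * α * c * ε / κ = (c - 1) / (2 * κ) := by rw [hkey]; ring
    linarith
  have h2δ : ∀ i j : Fin q, |σ' i - σ i| + |σ' j - σ j| ≤ (c - 1) * (1 / κ) := by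
    intro i j
    have e : (c-1)/(2*κ) + (c-1)/(2*κ) = (c-1) * (1/κ) := by ring
    linarith [hδ i, hδ j]
  have hLσ : ∀ i, 1 / κ ≤ σ i := by
    intro i
    rw [div_le_iff₀ hκ0]
    have h := inv_le_kappa σ i
    rw [div_le_iff₀ (hpos i)] at h
    nlinarith
  have hs : ∀ i, (2 - c) * σ i ≤ σ' i ∧ σ' i ≤ c * σ i := by
    intro i
    apply sandwich hc1 (by positivity) (hLσ i)
    calc |σ' i - σ i| ≤ (c - 1) / (2 * κ) := hδ i
      _ ≤ (c - 1) * (1 / κ) := by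
          rw [mul_one_div, div_le_div_iff₀ (by positivity) hκ0]
          nlinarith [mul_nonneg (sub_nonneg.mpr hc1) hκ0.le]
  have hA : ∀ i j, i ≠ j →
      ((2-c) * |σ i - σ j| ≤ |σ' i - σ' j| ∧ |σ' i - σ' j| ≤ c * |σ i - σ j|) := by
    intro i j hij
    have ha : 0 < |σ i - σ j| := abs_pos.mpr (sub_ne_zero.mpr (hdist i j hij))
    have hb : 0 < σ i + σ j := by have := hpos i; have := hpos j; linarith
    have hpk := pair_le_kappa σ hij
    have hbinv : 0 < 1 / (σ i + σ j) := by positivity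
    have h1a : 1 / |σ i - σ j| ≤ κ := by linarith
    have hLa : 1 / κ ≤ |σ i - σ j| := by
      rw [div_le_iff₀ hκ0]
      rw [div_le_iff₀ ha] at h1a
      nlinarith
    apply sandwich hc1 (by positivity) hLa
    refine le_trans (abs_abs_sub_abs_le_abs_sub _ _) ?_
    calc |σ' i - σ' j - (σ i - σ j)| = |(σ' i - σ i) - (σ' j - σ j)| := by congr 1; ring
      _ ≤ |σ' i - σ i| + |σ' j - σ j| := abs_sub _ _
      _ ≤ (c - 1) * (1 / κ) := h2δ i j
  have hB : ∀ i j, i ≠ j →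
      ((2-c) * (σ i + σ j) ≤ σ' i + σ' j ∧ σ' i + σ' j ≤ c * (σ i + σ j)) := by
    intro i j hij
    have ha : 0 < |σ i - σ j| := abs_pos.mpr (sub_ne_zero.mpr (hdist i j hij))
    have hb : 0 < σ i + σ j := by have := hpos i; have := hpos j; linarith
    have hpk := pair_le_kappa σ hij
    have hainv : 0 < 1 / |σ i - σ j| := by positivity
    have h1b : 1 / (σ i + σ j) ≤ κ := by linarith
    have hLb : 1 / κ ≤ σ i + σ j := by
      rw [div_le_iff₀ hκ0]
      rw [div_le_iff₀ hb] at h1b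
      nlinarith
    apply sandwich hc1 (by positivity) hLb
    calc |σ' i + σ' j - (σ i + σ j)| = |(σ' i - σ i) + (σ' j - σ j)| := by congr 1; ring
      _ ≤ |σ' i - σ i| + |σ' j - σ j| := abs_add_le _ _
      _ ≤ (c - 1) * (1 / κ) := h2δ i j
  have hpos' : ∀ i, 0 < σ' i := fun i => lt_of_lt_of_le (mul_pos h2c (hpos i)) (hs i).1
  have hdist' : ∀ i j, i ≠ j → σ' i ≠ σ' j := by
    intro i j hij
    have ha : 0 < |σ i - σ j| := abs_pos.mpr (sub_ne_zero.mpr (hdist i j hij))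
    have h : 0 < |σ' i - σ' j| := lt_of_lt_of_le (mul_pos h2c ha) (hA i j hij).1
    exact sub_ne_zero.mp (abs_pos.mp h)
  set κ' := kappa σ' with hκ'def
  have hκ'1 : (1:ℝ) ≤ κ' := one_le_kappa σ'
  have hδhalf : (c - 1) / (2 * κ) ≤ (c - 1) / 2 := by
    rw [div_le_div_iff₀ (by positivity) (by norm_num)]
    nlinarith [mul_nonneg (sub_nonneg.mpr hc1) (sub_nonneg.mpr hκ1)]
  refine ⟨hpos', hdist', ?_, ?_, ?_, ?_⟩
  · -- Kbig lower bound
    rw [hkey, sub_le_iff_le_add]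
    simp only [Kbig]
    have hhalf : (0:ℝ) ≤ (c - 1) / 2 := by linarith
    apply max_le
    · have h := le_max_left (1:ℝ) (⨆ i, σ' i)
      linarith
    · refine le_trans (ciSup_le fun i => ?_) (le_refl _)
      have h1 := (abs_le.mp (hδ i)).1
      have h2 := fin_le_ciSup σ' i
      have h3 := le_max_right (1:ℝ) (⨆ i, σ' i)
      linarith [hδhalf]
  · -- Kbig upper bound
    rw [hkey]
    simp only [Kbig]
    have hhalf : (0:ℝ) ≤ (c - 1) / 2 := by linarith
    apply max_le
    · have h := le_max_left (1:ℝ) (⨆ i, σ i)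
      linarith
    · refine le_trans (ciSup_le fun i => ?_) (le_refl _)
      have h1 := (abs_le.mp (hδ i)).2
      have h2 := fin_le_ciSup σ i
      have h3 := le_max_right (1:ℝ) (⨆ i, σ i)
      linarith [hδhalf]
  · -- kappa lower bound
    rw [div_le_iff₀ hc0, hκdef]
    simp only [kappa]
    apply max_le
    · nlinarith
    apply max_le
    · apply ciSup_le; intro i
      have t1 : 1 / σ i ≤ c * (1 / σ' i) := by
        rw [mul_one_div, div_le_div_iff₀ (hpos i) (hpos' i)]
        nlinarith [(hs i).2]
      have t2 : 1 / σ' i ≤ κ' := inv_le_kappa σ' i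
      nlinarith [mul_le_mul_of_nonneg_left t2 hc0.le]
    · apply ciSup_le; intro i
      apply ciSup_le; intro j
      by_cases hij : i = j
      · simp only [hij, ne_eq, not_true_eq_false, if_false]
        nlinarith
      · rw [if_pos hij]
        have ha : 0 < |σ i - σ j| := abs_pos.mpr (sub_ne_zero.mpr (hdist i j hij))
        have ha' : 0 < |σ' i - σ' j| := lt_of_lt_of_le (mul_pos h2c ha) (hA i j hij).1
        have hb : 0 < σ i + σ j := by have := hpos i; have := hpos j; linarith
        have hb' : 0 < σ' i + σ' j := by have := hpos' i; have := hpos' j; linarith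
        have t1 : 1 / |σ i - σ j| ≤ c * (1 / |σ' i - σ' j|) := by
          rw [mul_one_div, div_le_div_iff₀ ha ha']
          nlinarith [(hA i j hij).2]
        have t2 : 1 / (σ i + σ j) ≤ c * (1 / (σ' i + σ' j)) := by
          rw [mul_one_div, div_le_div_iff₀ hb hb']
          nlinarith [(hB i j hij).2]
        have t3 := pair_le_kappa σ' hij
        nlinarith [mul_le_mul_of_nonneg_left t3 hc0.le]
  · -- kappa upper bound
    rw [h4c, hκ'def]
    simp only [kappa]
    apply max_le
    · rw [le_div_iff₀ h2c]; nlinarith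
    apply max_le
    · apply ciSup_le; intro i
      have t1 : 1 / σ' i ≤ 1 / ((2-c) * σ i) :=
        one_div_le_one_div_of_le (mul_pos h2c (hpos i)) (hs i).1
      have t2 : 1 / ((2-c) * σ i) = (1 / σ i) / (2 - c) := by
        rw [div_div, mul_comm (σ i) (2 - c)]
      have t3 : (1 / σ i) / (2-c) ≤ κ / (2-c) :=
        (div_le_div_iff_of_pos_right h2c).mpr (inv_le_kappa σ i)
      linarith
    · apply ciSup_le; intro i
      apply ciSup_le; intro j
      by_cases hij : i = j
      · simp only [hij, ne_eq, not_true_eq_false, if_false]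
        positivity
      · rw [if_pos hij]
        have ha : 0 < |σ i - σ j| := abs_pos.mpr (sub_ne_zero.mpr (hdist i j hij))
        have hb : 0 < σ i + σ j := by have := hpos i; have := hpos j; linarith
        have t1 : 1 / |σ' i - σ' j| ≤ 1 / ((2-c) * |σ i - σ j|) :=
          one_div_le_one_div_of_le (mul_pos h2c ha) (hA i j hij).1
        have t1' : 1 / ((2-c) * |σ i - σ j|) = (1 / |σ i - σ j|) / (2 - c) := by
          rw [div_div, mul_comm |σ i - σ j| (2 - c)]
        have t2 : 1 / (σ' i + σ' j) ≤ 1 / ((2-c) * (σ i + σ j)) :=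
          one_div_le_one_div_of_le (mul_pos h2c hb) (hB i j hij).1
        have t2' : 1 / ((2-c) * (σ i + σ j)) = (1 / (σ i + σ j)) / (2 - c) := by
          rw [div_div, mul_comm (σ i + σ j) (2 - c)]
        have hsum : (1 / |σ i - σ j|) / (2-c) + (1 / (σ i + σ j)) / (2-c)
            = (1 / |σ i - σ j| + 1 / (σ i + σ j)) / (2-c) := (add_div _ _ _).symm
        have t3 : (1 / |σ i - σ j| + 1 / (σ i + σ j)) / (2-c) ≤ κ / (2-c) :=
          (div_le_div_iff_of_pos_right h2c).mpr (pair_le_kappa σ hij)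
        linarith
end

section
/- Define a₁(u) = 1/(1+√(1−u²)), a₂(u) = (a₁(u) − 1/2)/u², b₁(u) = u²a₁(u)²/√(1−u²) + 2a₁(u), and b₂(u) = a₁(u)²/√(1−u²) + 2a₂(u). Then for all real x, y with 0 ≤ y ≤ x and x + y < 1, and for i ∈ {1, 2}: (x+y)^{2i}·a_i(x+y) − x^{2i}·a_i(x) − y^{2i}·a_i(y) ≤ b_i(x+y)·x·y·(x+y)^{2i−2}. -/
open scoped BigOperators

/-- `a₁(u) = 1/(1+√(1−u²))`. -/
noncomputable def a1 (u : ℝ) : ℝ := 1 / (1 + Real.sqrt (1 - u ^ 2))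

/-- `a₂(u) = (a₁(u) − 1/2)/u²`. -/
noncomputable def a2 (u : ℝ) : ℝ := (a1 u - 1 / 2) / u ^ 2

/-- `b₁(u) = u²a₁(u)²/√(1−u²) + 2a₁(u)`. -/
noncomputable def b1 (u : ℝ) : ℝ := u ^ 2 * a1 u ^ 2 / Real.sqrt (1 - u ^ 2) + 2 * a1 u

/-- `b₂(u) = a₁(u)²/√(1−u²) + 2a₂(u)`. -/
noncomputable def b2 (u : ℝ) : ℝ := a1 u ^ 2 / Real.sqrt (1 - u ^ 2) + 2 * a2 u

/-- `c_k = (−1)^{k+1}(2k)!/(4^k (k!)² (2k−1))`, the Taylor coefficients of `√(1+u²)−1`. -/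
noncomputable def ck (k : ℕ) : ℝ :=
  (-1 : ℝ) ^ (k + 1) * (Nat.factorial (2 * k) : ℝ) /
    ((4 : ℝ) ^ k * ((Nat.factorial k : ℝ)) ^ 2 * ((2 * k - 1 : ℕ) : ℝ))

lemma a1_key (u : ℝ) (hu0 : 0 ≤ u) (hu1 : u < 1) :
    u ^ 2 * a1 u = 1 - Real.sqrt (1 - u ^ 2) := by
  have h2 : Real.sqrt (1 - u ^ 2) ^ 2 = 1 - u ^ 2 := Real.sq_sqrt (by nlinarith)
  have hpos : 0 < 1 + Real.sqrt (1 - u ^ 2) := by positivity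
  rw [a1]
  field_simp
  linear_combination h2

lemma a2_key (u : ℝ) : u ^ 4 * a2 u = u ^ 2 * a1 u - u ^ 2 / 2 := by
  rcases eq_or_ne u 0 with h | h
  · simp [h, a2]
  · rw [a2]
    field_simp

set_option maxHeartbeats 1600000

/-- Lemma 8.3: subadditivity-type estimate for `u^{2i} a_i(u)`, `i ∈ {1,2}`. -/
theorem ai_two_variable_bound (x y : ℝ) (hy0 : 0 ≤ y) (hyx : y ≤ x) (hxy : x + y < 1) :
    ((x + y) ^ 2 * a1 (x + y) - x ^ 2 * a1 x - y ^ 2 * a1 y ≤ b1 (x + y) * x * y) ∧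
    ((x + y) ^ 4 * a2 (x + y) - x ^ 4 * a2 x - y ^ 4 * a2 y ≤
      b2 (x + y) * x * y * (x + y) ^ 2) := by
  have hx0 : 0 ≤ x := le_trans hy0 hyx
  rcases eq_or_lt_of_le hx0 with hx | hx
  · -- x = 0, hence y = 0
    have hxe : x = 0 := hx.symm
    have hye : y = 0 := le_antisymm (hxe ▸ hyx) hy0
    subst hxe; subst hye
    norm_num
  · -- x > 0
    have hs0 : 0 < x + y := by linarith
    have hs1 : x + y < 1 := hxy
    have hx1 : x < 1 := by linarith
    have hy1 : y < 1 := by linarith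
    set s := x + y with hs
    set A := Real.sqrt (1 - x ^ 2) with hA
    set B := Real.sqrt (1 - y ^ 2) with hB
    set C := Real.sqrt (1 - s ^ 2) with hC
    have hA2 : A ^ 2 = 1 - x ^ 2 := Real.sq_sqrt (by nlinarith)
    have hB2 : B ^ 2 = 1 - y ^ 2 := Real.sq_sqrt (by nlinarith)
    have hC2 : C ^ 2 = 1 - s ^ 2 := Real.sq_sqrt (by nlinarith)
    have hA0 : 0 ≤ A := Real.sqrt_nonneg _
    have hB0 : 0 ≤ B := Real.sqrt_nonneg _
    have hC0 : 0 < C := Real.sqrt_pos.2 (by nlinarith)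
    have hCA : C ≤ A := Real.sqrt_le_sqrt (by nlinarith)
    have hCB : C ≤ B := Real.sqrt_le_sqrt (by nlinarith)
    have hA1 : A ≤ 1 := by nlinarith [sq_nonneg (A - 1)]
    have hB1 : B ≤ 1 := by nlinarith [sq_nonneg (B - 1)]
    have hC1 : C ≤ 1 := le_trans hCA hA1
    have hABsq : 1 < (A + B) ^ 2 := by
      nlinarith [mul_nonneg hA0 hB0, mul_nonneg hx0 hy0]
    have hAB : 1 ≤ A + B := by
      by_contra hcon
      push_neg at hcon
      have h4 : 0 ≤ 1 - (A + B) := by linarith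
      have h5 : 0 ≤ 1 + (A + B) := by linarith
      have h6 : (1 - (A + B)) * (1 + (A + B)) = 1 - (A + B) ^ 2 := by ring
      linarith [mul_nonneg h4 h5, h6]
    -- The key inequality
    have hPnn : 0 ≤ (1 - A) * (1 - B) := mul_nonneg (by linarith) (by linarith)
    have hQ : 2 * C ^ 2 ≤ (1 + A) * (1 + B) := by
      have hCC : C ^ 2 ≤ A * B := by
        rw [sq]; exact mul_le_mul hCA hCB hC0.le hA0
      have hC2le : C ^ 2 ≤ 1 := by rw [sq]; nlinarith
      have expand : (1 + A) * (1 + B) = 1 + A + B + A * B := by ring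
      rw [expand]
      linarith
    have hC2' : C ^ 2 = 1 - (x + y) ^ 2 := by rw [hC2, hs]
    have hident : (C ^ 2 + x * y) ^ 2 - (C * (A + B - 1)) ^ 2
        = (1 - A) * (1 - B) * ((1 + A) * (1 + B) - 2 * C ^ 2) := by
      linear_combination (C ^ 2) * hC2' + (1 - C ^ 2 - B ^ 2) * hA2 + (x ^ 2 - C ^ 2) * hB2
    have hsq : (C * (A + B - 1)) ^ 2 ≤ (C ^ 2 + x * y) ^ 2 := by
      nlinarith [mul_nonneg hPnn (by linarith : (0:ℝ) ≤ (1 + A) * (1 + B) - 2 * C ^ 2)]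
    have h1 : 0 ≤ C * (A + B - 1) := mul_nonneg hC0.le (by linarith)
    have h2 : 0 ≤ C ^ 2 + x * y := by positivity
    have key : C * (A + B - 1) ≤ C ^ 2 + x * y := by
      have h3 := Real.sqrt_le_sqrt hsq
      rwa [Real.sqrt_sq h1, Real.sqrt_sq h2] at h3
    -- b1 s = 1 / C
    have ha1s : a1 s = 1 / (1 + C) := by rw [a1, ← hC]
    have hpos : 0 < 1 + C := by positivity
    have eb1 : b1 s = 1 / C := by
      rw [b1, ← hC, ha1s]
      field_simp
      linear_combination hC2
    -- part 1
    have e1s : s ^ 2 * a1 s = 1 - C := by rw [a1_key s hs0.le hs1, hC]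
    have e1x : x ^ 2 * a1 x = 1 - A := by rw [a1_key x hx0 hx1, hA]
    have e1y : y ^ 2 * a1 y = 1 - B := by rw [a1_key y hy0 hy1, hB]
    have part1 : s ^ 2 * a1 s - x ^ 2 * a1 x - y ^ 2 * a1 y ≤ b1 s * x * y := by
      rw [e1s, e1x, e1y, eb1]
      rw [show (1:ℝ)/C*x*y = x*y/C by ring, le_div_iff₀ hC0]
      nlinarith [key]
    refine ⟨part1, ?_⟩
    -- part 2
    have e2b : s ^ 2 * b2 s = b1 s - 1 := by
      rw [b2, a2, ← hC, ha1s, eb1]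
      field_simp
      linear_combination hC2
    have eL : s ^ 4 * a2 s - x ^ 4 * a2 x - y ^ 4 * a2 y
        = (s ^ 2 * a1 s - x ^ 2 * a1 x - y ^ 2 * a1 y) - x * y := by
      rw [a2_key s, a2_key x, a2_key y, hs]; ring
    have eR : b2 s * x * y * s ^ 2 = b1 s * x * y - x * y := by
      linear_combination x * y * e2b
    rw [eL, eR]
    linarith [part1]
end
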